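/- Let X* ∈ ℝ^(n₁×n₂) be a matrix of rank r* with compact SVD X* = UΣVᵀ. For any H ∈ ℝ^(n₁×n₂), letting H_T and H_{T⊥} denote the orthogonal projections of H onto the tangent space T = {UAᵀ + BVᵀ} at X* and its orthogonal complement respectively, we have ‖X* + H‖_* ≥ ‖X*‖_* + ‖H_{T⊥}‖_* - ‖H_T‖_*. -/

import Mathlib

open Finset Matrix


noncomputable def nuclearNorm {n₁ n₂ : ℕ} (M : Matrix (Fin n₁) (Fin n₂) ℝ) : ℝ :=
  ∑ i, Real.sqrt ((Matrix.isHermitian_conjTranspose_mul_self M).eigenvalues i)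

section spec
variable {a b : ℕ} (M : Matrix (Fin a) (Fin b) ℝ)

noncomputable def specQ : Matrix (Fin b) (Fin b) ℝ :=
  ((Matrix.isHermitian_conjTranspose_mul_self M).eigenvectorUnitary : Matrix (Fin b) (Fin b) ℝ)

noncomputable def specL : Fin b → ℝ :=
  (Matrix.isHermitian_conjTranspose_mul_self M).eigenvalues

lemma specQ_orth1 : (specQ M)ᵀ * specQ M = 1 := by
  have h := ((Matrix.isHermitian_conjTranspose_mul_self M).eigenvectorUnitary).2
  rw [Matrix.mem_unitaryGroup_iff'] at h
  simpa [specQ, Matrix.star_eq_conjTranspose,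
    Matrix.conjTranspose_eq_transpose_of_trivial] using h

lemma specQ_orth2 : specQ M * (specQ M)ᵀ = 1 := by
  have h := ((Matrix.isHermitian_conjTranspose_mul_self M).eigenvectorUnitary).2
  rw [Matrix.mem_unitaryGroup_iff] at h
  simpa [specQ, Matrix.star_eq_conjTranspose,
    Matrix.conjTranspose_eq_transpose_of_trivial] using h

lemma spec_diag : (specQ M)ᵀ * (Mᵀ * M) * specQ M = Matrix.diagonal (specL M) := by
  have h := (Matrix.isHermitian_conjTranspose_mul_self M).conjStarAlgAut_star_eigenvectorUnitary
  rw [Unitary.conjStarAlgAut_star_apply] at h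
  rw [Matrix.star_eq_conjTranspose, Matrix.conjTranspose_eq_transpose_of_trivial] at h
  simpa [specQ, specL, Matrix.conjTranspose_eq_transpose_of_trivial,
    RCLike.ofReal_real_eq_id] using h

lemma specL_nonneg (i : Fin b) : 0 ≤ specL M i :=
  (Matrix.posSemidef_conjTranspose_mul_self M).eigenvalues_nonneg i

lemma nuclearNorm_eq : nuclearNorm M = ∑ i, Real.sqrt (specL M i) := rfl

end spec

lemma cauchy_sum {n : ℕ} (f g : Fin n → ℝ) :
    ∑ i, f i * g i ≤ Real.sqrt (∑ i, f i ^ 2) * Real.sqrt (∑ i, g i ^ 2) := by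
  have h := Finset.sum_mul_sq_le_sq_mul_sq Finset.univ f g
  have h1 : ∑ i, f i * g i ≤ |∑ i, f i * g i| := le_abs_self _
  refine h1.trans ?_
  rw [← Real.sqrt_sq_eq_abs, ← Real.sqrt_mul (by positivity)]
  exact Real.sqrt_le_sqrt h

lemma quad_eq {a b : ℕ} (A B : Matrix (Fin a) (Fin b) ℝ) (x : Fin b → ℝ) :
    (A *ᵥ x) ⬝ᵥ (B *ᵥ x) = x ⬝ᵥ ((Aᵀ * B) *ᵥ x) := by
  rw [Matrix.dotProduct_mulVec x, ← Matrix.vecMul_vecMul, Matrix.vecMul_transpose,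
    Matrix.dotProduct_mulVec]

lemma key_ub {a b : ℕ} (M G : Matrix (Fin a) (Fin b) ℝ)
    (hG : ∀ x : Fin b → ℝ, (G *ᵥ x) ⬝ᵥ (G *ᵥ x) ≤ x ⬝ᵥ x) :
    (Gᵀ * M).trace ≤ nuclearNorm M := by
  set Q := specQ M with hQdef
  have hQ1 := specQ_orth1 M
  have hQ2 := specQ_orth2 M
  have hdiag := spec_diag M
  have htr : (Gᵀ * M).trace = ((G * Q)ᵀ * (M * Q)).trace := by
    rw [Matrix.transpose_mul]
    have e : Qᵀ * Gᵀ * (M * Q) = (Qᵀ * (Gᵀ * M)) * Q := by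
      simp [Matrix.mul_assoc]
    rw [e, Matrix.trace_mul_comm (Qᵀ * (Gᵀ * M)) Q, ← Matrix.mul_assoc, hQ2, Matrix.one_mul]
  have hcol : ∀ (c : ℕ) (C : Matrix (Fin c) (Fin b) ℝ) (i : Fin b),
      (fun k => (C * Q) k i) = C *ᵥ (fun j => Q j i) := by
    intro c C i; funext k; simp [Matrix.mul_apply, Matrix.mulVec, dotProduct]
  have hQAQ : ∀ (A : Matrix (Fin b) (Fin b) ℝ) (i : Fin b),
      (fun j => Q j i) ⬝ᵥ (A *ᵥ (fun j => Q j i)) = (Qᵀ * A * Q) i i := by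
    intro A i
    simp only [Matrix.mul_apply, Matrix.mulVec, dotProduct, Matrix.transpose_apply,
      Finset.mul_sum, Finset.sum_mul]
    rw [Finset.sum_comm]
    apply Finset.sum_congr rfl
    intro k _
    apply Finset.sum_congr rfl
    intro j _
    ring
  calc (Gᵀ * M).trace = ∑ i, ((G * Q)ᵀ * (M * Q)) i i := by
        rw [htr]; simp [Matrix.trace, Matrix.diag]
    _ ≤ ∑ i, Real.sqrt (specL M i) := by
        apply Finset.sum_le_sum
        intro i _
        set ci : Fin b → ℝ := fun j => Q j i with hci
        have e1 : ((G * Q)ᵀ * (M * Q)) i i = ∑ k, (G *ᵥ ci) k * (M *ᵥ ci) k := by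
          simp only [Matrix.mul_apply, Matrix.transpose_apply, hci, Matrix.mulVec,
            dotProduct]
        have hciu : ci ⬝ᵥ ci = 1 := by
          have : ci ⬝ᵥ ci = (Qᵀ * Q) i i := by
            simp [Matrix.mul_apply, dotProduct, Matrix.transpose_apply, hci]
          rw [this, hQ1]
          simp [Matrix.one_apply]
        have hGc : ∑ k, ((G *ᵥ ci) k) ^ 2 ≤ 1 := by
          have h := hG ci
          rw [hciu] at h
          simpa [dotProduct, pow_two] using h
        have hMc : ∑ k, ((M *ᵥ ci) k) ^ 2 = specL M i := by
          have h : (M *ᵥ ci) ⬝ᵥ (M *ᵥ ci) = specL M i := by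
            rw [quad_eq, hQAQ, hdiag]
            simp [Matrix.diagonal_apply_eq]
          simpa [dotProduct, pow_two] using h
        rw [e1]
        calc ∑ k, (G *ᵥ ci) k * (M *ᵥ ci) k
            ≤ Real.sqrt (∑ k, ((G *ᵥ ci) k) ^ 2) * Real.sqrt (∑ k, ((M *ᵥ ci) k) ^ 2) :=
              cauchy_sum _ _
          _ ≤ Real.sqrt 1 * Real.sqrt (specL M i) := by
              rw [hMc]
              gcongr
          _ = Real.sqrt (specL M i) := by simp
    _ = nuclearNorm M := (nuclearNorm_eq M).symm

lemma dot_conj {n : ℕ} (Q B : Matrix (Fin n) (Fin n) ℝ) (x : Fin n → ℝ) :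
    x ⬝ᵥ ((Q * B * Qᵀ) *ᵥ x) = (Qᵀ *ᵥ x) ⬝ᵥ (B *ᵥ (Qᵀ *ᵥ x)) := by
  rw [← Matrix.mulVec_mulVec, ← Matrix.mulVec_mulVec, Matrix.dotProduct_mulVec x Q,
    Matrix.mulVec_transpose]

lemma key_cert {a b : ℕ} (M : Matrix (Fin a) (Fin b) ℝ) :
    ∃ G : Matrix (Fin a) (Fin b) ℝ,
      (∀ x : Fin b → ℝ, (G *ᵥ x) ⬝ᵥ (G *ᵥ x) ≤ x ⬝ᵥ x) ∧
      (Gᵀ * M).trace = nuclearNorm M ∧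
      (∀ (c : ℕ) (P : Matrix (Fin c) (Fin a) ℝ), P * M = 0 → P * G = 0) ∧
      (∀ (c : ℕ) (P : Matrix (Fin b) (Fin c) ℝ), M * P = 0 → G * P = 0) := by
  set Q := specQ M with hQdef
  have hQ1 := specQ_orth1 M
  have hQ2 := specQ_orth2 M
  have hdiag := spec_diag M
  set g : Fin b → ℝ := fun i => if 0 < specL M i then (Real.sqrt (specL M i))⁻¹ else 0 with hg
  set G : Matrix (Fin a) (Fin b) ℝ := M * (Q * Matrix.diagonal g * Qᵀ) with hG
  have hGT : Gᵀ = Q * Matrix.diagonal g * Qᵀ * Mᵀ := by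
    rw [hG]
    simp [Matrix.transpose_mul, Matrix.diagonal_transpose, Matrix.mul_assoc]
  -- GᵀG = Q * diagonal e * Qᵀ with e i ∈ {0,1}
  set e : Fin b → ℝ := fun i => if 0 < specL M i then 1 else 0 with he
  have hGG : Gᵀ * G = Q * Matrix.diagonal e * Qᵀ := by
    rw [hGT, hG]
    have e1 : Q * Matrix.diagonal g * Qᵀ * Mᵀ * (M * (Q * Matrix.diagonal g * Qᵀ))
        = Q * Matrix.diagonal g * (Qᵀ * (Mᵀ * M) * Q) * Matrix.diagonal g * Qᵀ := by
      simp [Matrix.mul_assoc]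
    rw [e1, hdiag]
    have e2 : Q * Matrix.diagonal g * Matrix.diagonal (specL M) * Matrix.diagonal g * Qᵀ
        = Q * (Matrix.diagonal g * Matrix.diagonal (specL M) * Matrix.diagonal g) * Qᵀ := by
      simp [Matrix.mul_assoc]
    rw [e2]
    have hdd : Matrix.diagonal g * Matrix.diagonal (specL M) * Matrix.diagonal g
        = Matrix.diagonal e := by
      rw [Matrix.diagonal_mul_diagonal, Matrix.diagonal_mul_diagonal]
      apply congrArg Matrix.diagonal
      funext i
      show g i * specL M i * g i = e i
      by_cases h : 0 < specL M i
      · have hs : Real.sqrt (specL M i) * Real.sqrt (specL M i) = specL M i :=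
          Real.mul_self_sqrt (le_of_lt h)
        have hs0 : Real.sqrt (specL M i) ≠ 0 := by positivity
        calc g i * specL M i * g i
            = (Real.sqrt (specL M i))⁻¹ * (Real.sqrt (specL M i) * Real.sqrt (specL M i))
              * (Real.sqrt (specL M i))⁻¹ := by rw [hs]; simp [hg, he, h]
          _ = e i := by rw [inv_mul_cancel_left₀ hs0, mul_inv_cancel₀ hs0]; simp [he, h]
      · simp [hg, he, h]
    rw [hdd]
  refine ⟨G, ?_, ?_, ?_, ?_⟩
  · -- operator norm bound
    intro x
    rw [quad_eq, hGG]
    set y : Fin b → ℝ := Qᵀ *ᵥ x with hy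
    have h1 : x ⬝ᵥ ((Q * Matrix.diagonal e * Qᵀ) *ᵥ x) = y ⬝ᵥ (Matrix.diagonal e *ᵥ y) := by
      rw [hy]; exact dot_conj Q (Matrix.diagonal e) x
    have h2 : y ⬝ᵥ (Matrix.diagonal e *ᵥ y) ≤ y ⬝ᵥ y := by
      simp only [Matrix.mulVec_diagonal, dotProduct]
      apply Finset.sum_le_sum
      intro i _
      by_cases h : 0 < specL M i
      · simp [he, h]
      · simpa [he, h] using mul_self_nonneg (y i)
    have h3 : y ⬝ᵥ y = x ⬝ᵥ x := by
      rw [hy, quad_eq, Matrix.transpose_transpose, hQ2]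
      simp
    rw [h1]
    rw [h3] at h2
    exact h2
  · -- trace identity
    have e1 : Gᵀ * M = Q * (Matrix.diagonal g * (Qᵀ * (Mᵀ * M))) := by
      rw [hGT]; simp [Matrix.mul_assoc]
    rw [e1, Matrix.trace_mul_comm Q, Matrix.mul_assoc, Matrix.mul_assoc]
    have e2 : Qᵀ * (Mᵀ * M * Q) = Matrix.diagonal (specL M) := by
      rw [← hdiag]; simp [Matrix.mul_assoc]; rfl
    rw [e2, Matrix.diagonal_mul_diagonal, Matrix.trace_diagonal, nuclearNorm_eq]
    apply Finset.sum_congr rfl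
    intro i _
    by_cases h : 0 < specL M i
    · have hs : Real.sqrt (specL M i) * Real.sqrt (specL M i) = specL M i :=
        Real.mul_self_sqrt (le_of_lt h)
      have hs0 : Real.sqrt (specL M i) ≠ 0 := by positivity
      calc g i * specL M i
          = (Real.sqrt (specL M i))⁻¹ * (Real.sqrt (specL M i) * Real.sqrt (specL M i)) := by
            rw [hs]; simp [hg, h]
        _ = Real.sqrt (specL M i) := inv_mul_cancel_left₀ hs0 _
    · have h0 : specL M i = 0 := le_antisymm (not_lt.mp h) (specL_nonneg M i)
      simp [hg, h, h0]
  · -- left nullspace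
    intro c P hP
    rw [hG, ← Matrix.mul_assoc, hP, Matrix.zero_mul]
  · -- right nullspace
    intro c P hP
    have hMMP : Mᵀ * M * P = 0 := by rw [Matrix.mul_assoc, hP, Matrix.mul_zero]
    have hLQP : Matrix.diagonal (specL M) * (Qᵀ * P) = 0 := by
      have : Matrix.diagonal (specL M) * (Qᵀ * P) = Qᵀ * (Mᵀ * M * P) := by
        rw [← hdiag]
        calc (Qᵀ * (Mᵀ * M) * Q) * (Qᵀ * P)
            = Qᵀ * (Mᵀ * M) * (Q * Qᵀ) * P := by simp [Matrix.mul_assoc]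
          _ = Qᵀ * (Mᵀ * M * P) := by rw [hQ2]; simp [Matrix.mul_assoc]
      rw [this, hMMP, Matrix.mul_zero]
    have hDQP : Matrix.diagonal g * (Qᵀ * P) = 0 := by
      ext i j
      have h0 := congrFun (congrFun hLQP i) j
      rw [Matrix.diagonal_mul] at h0
      rw [Matrix.diagonal_mul]
      show g i * (Qᵀ * P) i j = (0 : Matrix (Fin b) (Fin c) ℝ) i j
      by_cases h : 0 < specL M i
      · have hQP0 : (Qᵀ * P) i j = 0 :=
          (mul_eq_zero.mp h0).resolve_left (ne_of_gt h)
        simp [hQP0]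
      · simp [hg, h]
    calc G * P = M * Q * (Matrix.diagonal g * (Qᵀ * P)) := by rw [hG]; simp [Matrix.mul_assoc]
      _ = 0 := by rw [hDQP, Matrix.mul_zero]

lemma dot_self_nonneg {n : ℕ} (v : Fin n → ℝ) : 0 ≤ v ⬝ᵥ v :=
  Finset.sum_nonneg fun i _ => mul_self_nonneg _

section proj
variable {n r : ℕ} (V : Matrix (Fin n) (Fin r) ℝ) (hV : Vᵀ * V = 1)
include hV

lemma projVV : (V * Vᵀ) * (V * Vᵀ) = V * Vᵀ := by
  calc (V * Vᵀ) * (V * Vᵀ) = V * (Vᵀ * V) * Vᵀ := by simp [Matrix.mul_assoc]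
    _ = V * Vᵀ := by rw [hV, Matrix.mul_one]

lemma projP : (1 - V * Vᵀ) * (1 - V * Vᵀ) = 1 - V * Vᵀ := by
  have h : (1 - V * Vᵀ) * (1 - V * Vᵀ)
      = 1 - V * Vᵀ - V * Vᵀ + (V * Vᵀ) * (V * Vᵀ) := by noncomm_ring
  rw [h, projVV V hV]; abel

lemma proj_quad_le (x : Fin n → ℝ) : x ⬝ᵥ ((V * Vᵀ) *ᵥ x) ≤ x ⬝ᵥ x := by
  have hPs : (1 - V * Vᵀ)ᵀ = 1 - V * Vᵀ := by
    simp [Matrix.transpose_sub, Matrix.transpose_mul]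
  have h1 : ((1 - V * Vᵀ) *ᵥ x) ⬝ᵥ ((1 - V * Vᵀ) *ᵥ x) = x ⬝ᵥ ((1 - V * Vᵀ) *ᵥ x) := by
    rw [quad_eq, hPs, projP V hV]
  have h2 : (0:ℝ) ≤ x ⬝ᵥ ((1 - V * Vᵀ) *ᵥ x) := h1 ▸ dot_self_nonneg _
  have h3 : x ⬝ᵥ ((1 - V * Vᵀ) *ᵥ x) = x ⬝ᵥ x - x ⬝ᵥ ((V * Vᵀ) *ᵥ x) := by
    rw [Matrix.sub_mulVec, Matrix.one_mulVec, dotProduct_sub]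
  linarith [h3 ▸ h2]

end proj

theorem nuclear_norm_tangent_space_lower_bound
    (n₁ n₂ r : ℕ)
    (Xstar : Matrix (Fin n₁) (Fin n₂) ℝ)
    (U : Matrix (Fin n₁) (Fin r) ℝ) (V : Matrix (Fin n₂) (Fin r) ℝ)
    (S : Fin r → ℝ) (hS : ∀ i, 0 < S i)
    (hU : Uᵀ * U = 1) (hV : Vᵀ * V = 1)
    (hX : Xstar = U * Matrix.diagonal S * Vᵀ)
    (hrank : Xstar.rank = r)
    (H HT HTperp : Matrix (Fin n₁) (Fin n₂) ℝ)
    (hHT : HT = U * Uᵀ * H + H * (V * Vᵀ) - U * Uᵀ * H * (V * Vᵀ))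
    (hHTperp : HTperp = (1 - U * Uᵀ) * H * (1 - V * Vᵀ)) :
    nuclearNorm Xstar + nuclearNorm HTperp - nuclearNorm HT ≤ nuclearNorm (Xstar + H) := by
  obtain ⟨W, hWb, hWtr, hWL, hWR⟩ := key_cert HTperp
  -- nullspace facts
  have hUperp : Uᵀ * HTperp = 0 := by
    rw [hHTperp]
    have e1 : Uᵀ * ((1 - U * Uᵀ) * H * (1 - V * Vᵀ))
        = (Uᵀ * (1 - U * Uᵀ)) * (H * (1 - V * Vᵀ)) := by simp [Matrix.mul_assoc]
    have e2 : Uᵀ * (1 - U * Uᵀ) = 0 := by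
      rw [Matrix.mul_sub, Matrix.mul_one, ← Matrix.mul_assoc, hU, Matrix.one_mul, sub_self]
    rw [e1, e2, Matrix.zero_mul]
  have hVperp : HTperp * V = 0 := by
    rw [hHTperp]
    have e1 : (1 - U * Uᵀ) * H * (1 - V * Vᵀ) * V
        = ((1 - U * Uᵀ) * H) * ((1 - V * Vᵀ) * V) := by simp [Matrix.mul_assoc]
    have e2 : (1 - V * Vᵀ) * V = 0 := by
      rw [Matrix.sub_mul, Matrix.one_mul, Matrix.mul_assoc, hV, Matrix.mul_one, sub_self]
    rw [e1, e2, Matrix.mul_zero]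
  have hUW : Uᵀ * W = 0 := hWL r Uᵀ hUperp
  have hWV : W * V = 0 := hWR r V hVperp
  have hWTU : Wᵀ * U = 0 := by
    have := congrArg Matrix.transpose hUW
    simpa [Matrix.transpose_mul] using this
  have hVTWT : Vᵀ * Wᵀ = 0 := by
    have := congrArg Matrix.transpose hWV
    simpa [Matrix.transpose_mul] using this
  -- the dual certificate Z
  set Z : Matrix (Fin n₁) (Fin n₂) ℝ := U * Vᵀ + W with hZ
  have hZZ : Zᵀ * Z = V * Vᵀ + Wᵀ * W := by
    rw [hZ, Matrix.transpose_add, Matrix.transpose_mul, Matrix.transpose_transpose,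
      Matrix.add_mul, Matrix.mul_add, Matrix.mul_add]
    have t1 : V * Uᵀ * (U * Vᵀ) = V * Vᵀ := by
      calc V * Uᵀ * (U * Vᵀ) = V * (Uᵀ * U) * Vᵀ := by simp [Matrix.mul_assoc]
        _ = V * Vᵀ := by rw [hU, Matrix.mul_one]
    have t2 : V * Uᵀ * W = 0 := by
      rw [Matrix.mul_assoc, hUW, Matrix.mul_zero]
    have t3 : Wᵀ * (U * Vᵀ) = 0 := by
      rw [← Matrix.mul_assoc, hWTU, Matrix.zero_mul]
    rw [t1, t2, t3]
    abel
  -- operator norm bound for Z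
  have hZb : ∀ x : Fin n₂ → ℝ, (Z *ᵥ x) ⬝ᵥ (Z *ᵥ x) ≤ x ⬝ᵥ x := by
    intro x
    rw [quad_eq, hZZ, Matrix.add_mulVec, dotProduct_add]
    have hPs : (1 - V * Vᵀ)ᵀ = 1 - V * Vᵀ := by
      simp [Matrix.transpose_sub, Matrix.transpose_mul]
    have hA : ((1 - V * Vᵀ) *ᵥ x) ⬝ᵥ ((1 - V * Vᵀ) *ᵥ x) = x ⬝ᵥ ((1 - V * Vᵀ) *ᵥ x) := by
      rw [quad_eq, hPs, projP V hV]
    have hB : x ⬝ᵥ ((Wᵀ * W) *ᵥ x) = (W *ᵥ x) ⬝ᵥ (W *ᵥ x) := (quad_eq W W x).symm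
    have hWP : W = W * (1 - V * Vᵀ) := by
      rw [Matrix.mul_sub, Matrix.mul_one, ← Matrix.mul_assoc, hWV, Matrix.zero_mul, sub_zero]
    have hC : W *ᵥ x = W *ᵥ ((1 - V * Vᵀ) *ᵥ x) := by
      conv_lhs => rw [hWP]
      rw [← Matrix.mulVec_mulVec]
    have hD : (W *ᵥ ((1 - V * Vᵀ) *ᵥ x)) ⬝ᵥ (W *ᵥ ((1 - V * Vᵀ) *ᵥ x))
        ≤ ((1 - V * Vᵀ) *ᵥ x) ⬝ᵥ ((1 - V * Vᵀ) *ᵥ x) := hWb _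
    have hE : x ⬝ᵥ ((1 - V * Vᵀ) *ᵥ x) = x ⬝ᵥ x - x ⬝ᵥ ((V * Vᵀ) *ᵥ x) := by
      rw [Matrix.sub_mulVec, Matrix.one_mulVec, dotProduct_sub]
    rw [hB, hC]
    linarith
  -- H = HT + HTperp
  have hsum : HT + HTperp = H := by
    rw [hHT, hHTperp, Matrix.sub_mul, Matrix.one_mul, Matrix.mul_sub, Matrix.mul_one,
      Matrix.sub_mul]
    abel
  -- trace of Z against Xstar
  have tZX : (Zᵀ * Xstar).trace = ∑ i, S i := by
    rw [hZ, hX, Matrix.transpose_add, Matrix.transpose_mul, Matrix.transpose_transpose,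
      Matrix.add_mul, Matrix.trace_add]
    have t2 : Wᵀ * (U * Matrix.diagonal S * Vᵀ) = 0 := by
      calc Wᵀ * (U * Matrix.diagonal S * Vᵀ) = (Wᵀ * U) * (Matrix.diagonal S * Vᵀ) := by
            simp [Matrix.mul_assoc]
        _ = 0 := by rw [hWTU, Matrix.zero_mul]
    have t1 : V * Uᵀ * (U * Matrix.diagonal S * Vᵀ) = (V * Matrix.diagonal S) * Vᵀ := by
      calc V * Uᵀ * (U * Matrix.diagonal S * Vᵀ)
          = V * ((Uᵀ * U) * Matrix.diagonal S) * Vᵀ := by simp [Matrix.mul_assoc]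
        _ = (V * Matrix.diagonal S) * Vᵀ := by rw [hU, Matrix.one_mul]
    rw [t1, t2, Matrix.trace_zero, add_zero, Matrix.trace_mul_comm, ← Matrix.mul_assoc, hV,
      Matrix.one_mul, Matrix.trace_diagonal]
  -- trace of W against HT vanishes
  have tWHT : (Wᵀ * HT).trace = 0 := by
    rw [hHT, Matrix.mul_sub, Matrix.mul_add, Matrix.trace_sub, Matrix.trace_add]
    have t1 : Wᵀ * (U * Uᵀ * H) = 0 := by
      calc Wᵀ * (U * Uᵀ * H) = (Wᵀ * U) * (Uᵀ * H) := by simp [Matrix.mul_assoc]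
        _ = 0 := by rw [hWTU, Matrix.zero_mul]
    have t3 : Wᵀ * (U * Uᵀ * H * (V * Vᵀ)) = 0 := by
      calc Wᵀ * (U * Uᵀ * H * (V * Vᵀ)) = (Wᵀ * U) * (Uᵀ * H * (V * Vᵀ)) := by
            simp [Matrix.mul_assoc]
        _ = 0 := by rw [hWTU, Matrix.zero_mul]
    have t2 : (Wᵀ * (H * (V * Vᵀ))).trace = 0 := by
      have e : Wᵀ * (H * (V * Vᵀ)) = (Wᵀ * H * V) * Vᵀ := by simp [Matrix.mul_assoc]
      rw [e, Matrix.trace_mul_comm]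
      have e2 : Vᵀ * (Wᵀ * H * V) = (Vᵀ * Wᵀ) * (H * V) := by simp [Matrix.mul_assoc]
      rw [e2, hVTWT, Matrix.zero_mul, Matrix.trace_zero]
    rw [t1, t3, t2, Matrix.trace_zero, zero_add, sub_zero]
  -- trace of UVᵀ against HTperp vanishes
  have tUVHTp : ((U * Vᵀ)ᵀ * HTperp).trace = 0 := by
    rw [Matrix.transpose_mul, Matrix.transpose_transpose, Matrix.mul_assoc, hUperp,
      Matrix.mul_zero, Matrix.trace_zero]
  -- bound on trace of UVᵀ against HT
  have hUVb : ∀ x : Fin n₂ → ℝ, ((U * Vᵀ) *ᵥ x) ⬝ᵥ ((U * Vᵀ) *ᵥ x) ≤ x ⬝ᵥ x := by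
    intro x
    rw [quad_eq]
    have e : (U * Vᵀ)ᵀ * (U * Vᵀ) = V * Vᵀ := by
      rw [Matrix.transpose_mul, Matrix.transpose_transpose]
      calc V * Uᵀ * (U * Vᵀ) = V * (Uᵀ * U) * Vᵀ := by simp [Matrix.mul_assoc]
        _ = V * Vᵀ := by rw [hU, Matrix.mul_one]
    rw [e]
    exact proj_quad_le V hV x
  have tHT : -(((U * Vᵀ)ᵀ * HT).trace) ≤ nuclearNorm HT := by
    have hb : ∀ x : Fin n₂ → ℝ, ((-(U * Vᵀ)) *ᵥ x) ⬝ᵥ ((-(U * Vᵀ)) *ᵥ x) ≤ x ⬝ᵥ x := by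
      intro x
      rw [Matrix.neg_mulVec]
      simpa using hUVb x
    have h := key_ub HT (-(U * Vᵀ)) hb
    rwa [Matrix.transpose_neg, Matrix.neg_mul, Matrix.trace_neg] at h
  -- upper bound on nuclear norm of Xstar
  have tXub : nuclearNorm Xstar ≤ ∑ i, S i := by
    obtain ⟨G₀, hG₀b, hG₀tr, -, -⟩ := key_cert Xstar
    rw [← hG₀tr, hX]
    have e : G₀ᵀ * (U * Matrix.diagonal S * Vᵀ) = ((G₀ᵀ * U) * Matrix.diagonal S) * Vᵀ := by
      simp [Matrix.mul_assoc]
    rw [e, Matrix.trace_mul_comm]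
    have e2 : Vᵀ * ((G₀ᵀ * U) * Matrix.diagonal S) = (Vᵀ * (G₀ᵀ * U)) * Matrix.diagonal S := by
      simp [Matrix.mul_assoc]
    rw [e2]
    have e3 : ((Vᵀ * (G₀ᵀ * U)) * Matrix.diagonal S).trace
        = ∑ i, (Vᵀ * (G₀ᵀ * U)) i i * S i := by
      simp [Matrix.trace, Matrix.diag, Matrix.mul_diagonal]
    rw [e3]
    apply Finset.sum_le_sum
    intro i _
    have hBle : (Vᵀ * (G₀ᵀ * U)) i i ≤ 1 := by
      set vc : Fin n₂ → ℝ := fun j => V j i with hvc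
      set uc : Fin n₁ → ℝ := fun k => U k i with huc
      have eB : (Vᵀ * (G₀ᵀ * U)) i i = ∑ k, (G₀ *ᵥ vc) k * uc k := by
        simp only [Matrix.mul_apply, Matrix.transpose_apply, Matrix.mulVec, dotProduct,
          hvc, huc, Finset.mul_sum, Finset.sum_mul]
        rw [Finset.sum_comm]
        apply Finset.sum_congr rfl
        intro k _
        apply Finset.sum_congr rfl
        intro j _
        ring
      have hvv : ∑ k, ((G₀ *ᵥ vc) k) ^ 2 ≤ 1 := by
        have h := hG₀b vc
        have hvc1 : vc ⬝ᵥ vc = 1 := by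
          have : vc ⬝ᵥ vc = (Vᵀ * V) i i := by
            simp [Matrix.mul_apply, dotProduct, Matrix.transpose_apply, hvc]
          rw [this, hV]
          simp [Matrix.one_apply]
        rw [hvc1] at h
        simpa [dotProduct, pow_two] using h
      have huu : ∑ k, (uc k) ^ 2 = 1 := by
        have : ∑ k, (uc k) ^ 2 = (Uᵀ * U) i i := by
          simp [Matrix.mul_apply, Matrix.transpose_apply, huc, pow_two]
        rw [this, hU]
        simp [Matrix.one_apply]
      calc (Vᵀ * (G₀ᵀ * U)) i i = ∑ k, (G₀ *ᵥ vc) k * uc k := eB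
        _ ≤ Real.sqrt (∑ k, ((G₀ *ᵥ vc) k) ^ 2) * Real.sqrt (∑ k, (uc k) ^ 2) := cauchy_sum _ _
        _ ≤ Real.sqrt 1 * Real.sqrt 1 := by rw [huu]; gcongr
        _ = 1 := by simp
    calc (Vᵀ * (G₀ᵀ * U)) i i * S i ≤ 1 * S i :=
          mul_le_mul_of_nonneg_right hBle (le_of_lt (hS i))
      _ = S i := one_mul _
  -- assemble
  have main := key_ub (Xstar + H) Z hZb
  have split1 : Zᵀ * (Xstar + H) = Zᵀ * Xstar + (Zᵀ * HT + Zᵀ * HTperp) := by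
    rw [Matrix.mul_add, ← hsum, Matrix.mul_add]
  have split2 : Zᵀ * HT = (U * Vᵀ)ᵀ * HT + Wᵀ * HT := by
    rw [hZ, Matrix.transpose_add, Matrix.add_mul]
  have split3 : Zᵀ * HTperp = (U * Vᵀ)ᵀ * HTperp + Wᵀ * HTperp := by
    rw [hZ, Matrix.transpose_add, Matrix.add_mul]
  rw [split1, Matrix.trace_add, Matrix.trace_add, split2, split3, Matrix.trace_add,
    Matrix.trace_add, tZX, tWHT, tUVHTp, hWtr] at main
  linarith
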